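/- Let Δ ∈ ℤ[[q]] be the discriminant power series (defined by truncated products as in the context). Then the mod-2 reduction of Δ equals Σ_{n≥1} q^{(2n−1)²}; equivalently, for every m ≥ 1 the coefficient of q^m in Δ is odd if and only if m = d² for some odd natural number d (and the constant coefficient of Δ is 0, which is even). -/

import Mathlib

open scoped Classical

namespace DeltaMod2Aux

open Polynomial Finset


open Polynomial Finset

abbrev R2 := Polynomial (ZMod 2)

/-- Equality of coefficients up to degree `t`. -/
def LowEq (t : ℕ) (f g : R2) : Prop := ∀ i ≤ t, f.coeff i = g.coeff i

lemma LowEq.refl (t : ℕ) (f : R2) : LowEq t f f := fun _ _ => rfl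

lemma LowEq.symm {t f g} (h : LowEq t f g) : LowEq t g f := fun i hi => (h i hi).symm

lemma LowEq.trans {t f g h} (h1 : LowEq t f g) (h2 : LowEq t g h) : LowEq t f h :=
  fun i hi => (h1 i hi).trans (h2 i hi)

lemma LowEq.mul {t f f' g g'} (h1 : LowEq t f f') (h2 : LowEq t g g') :
    LowEq t (f * g) (f' * g') := by
  intro i hi
  rw [coeff_mul, coeff_mul]
  refine Finset.sum_congr rfl fun p hp => ?_
  rw [Finset.HasAntidiagonal.mem_antidiagonal] at hp
  have h1' : p.1 ≤ t := le_trans (by omega) hi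
  have h2' : p.2 ≤ t := le_trans (by omega) hi
  rw [h1 p.1 h1', h2 p.2 h2']

lemma lowEq_one_add_pow {t a : ℕ} (ha : t < a) : LowEq t (1 + X ^ a : R2) 1 := by
  intro i hi
  rw [coeff_add, coeff_X_pow, if_neg (by omega)]
  ring

lemma LowEq.prod {t : ℕ} {ι : Type*} {s : Finset ι} {F G : ι → R2}
    (h : ∀ i ∈ s, LowEq t (F i) (G i)) : LowEq t (∏ i ∈ s, F i) (∏ i ∈ s, G i) := by
  classical
  induction s using Finset.induction_on with
  | empty => exact LowEq.refl t 1
  | @insert a s' hx ih =>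
    rw [Finset.prod_insert hx, Finset.prod_insert hx]
    exact (h a (Finset.mem_insert_self a s')).mul
      (ih fun i hi => h i (Finset.mem_insert_of_mem hi))

/-- `PF e a b = ∏_{a < i ≤ b} (1 + X^(e i))`. -/
noncomputable def PF (e : ℕ → ℕ) (a b : ℕ) : R2 := ∏ i ∈ Finset.Ioc a b, (1 + X ^ e i)

lemma PF_succ_top (e : ℕ → ℕ) {a b : ℕ} (h : a ≤ b) :
    PF e a (b + 1) = PF e a b * (1 + X ^ e (b + 1)) := by
  unfold PF
  rw [Finset.prod_Ioc_succ_top h]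

lemma PF_consecutive (e : ℕ → ℕ) {a b c : ℕ} (hab : a ≤ b) (hbc : b ≤ c) :
    PF e a b * PF e b c = PF e a c :=
  Finset.prod_Ioc_consecutive _ hab hbc

lemma PF_lowEq_one {t : ℕ} (e : ℕ → ℕ) (a b : ℕ) (h : ∀ i, a < i → i ≤ b → t < e i) :
    LowEq t (PF e a b) 1 := by
  have := LowEq.prod (t := t) (s := Finset.Ioc a b) (F := fun i => (1 + X ^ e i : R2))
    (G := fun _ => 1) (fun i hi => by
      rw [Finset.mem_Ioc] at hi
      exact lowEq_one_add_pow (h i hi.1 hi.2))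
  rwa [Finset.prod_const_one] at this

lemma PF_lowEq_extend {t : ℕ} (e : ℕ → ℕ) (a : ℕ) {b b' : ℕ} (hbb : b ≤ b')
    (h : ∀ i, b < i → t < e i) (hab : a ≤ b) : LowEq t (PF e a b) (PF e a b') := by
  have h2 : LowEq t (PF e b b') 1 := PF_lowEq_one e b b' (fun i hi _ => h i hi)
  have h3 := (LowEq.refl t (PF e a b)).mul h2
  rw [PF_consecutive e hab hbb, mul_one] at h3
  exact h3.symm

lemma coeff_zero_PF (e : ℕ → ℕ) (a b : ℕ) (h : ∀ i, a < i → i ≤ b → e i ≠ 0) :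
    (PF e a b).coeff 0 = 1 := by
  unfold PF
  rw [← Polynomial.constantCoeff_apply, map_prod]
  rw [Finset.prod_eq_one]
  intro i hi
  rw [Finset.mem_Ioc] at hi
  rw [Polynomial.constantCoeff_apply, coeff_add, coeff_X_pow,
    if_neg (fun hc => h i hi.1 hi.2 hc.symm)]
  simp

lemma PF_ne_zero (e : ℕ → ℕ) (a b : ℕ) (h : ∀ i, a < i → i ≤ b → e i ≠ 0) :
    PF e a b ≠ 0 := fun hc => by
  have := coeff_zero_PF e a b h
  rw [hc] at this
  simp at this

/-- parity split of a product over `Ioc 0 (2m)`. -/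
lemma prod_Ioc_parity (f : ℕ → R2) (m : ℕ) :
    ∏ i ∈ Finset.Ioc 0 (2 * m), f i =
      (∏ i ∈ Finset.Ioc 0 m, f (2 * i)) * ∏ i ∈ Finset.Ioc 0 m, f (2 * i - 1) := by
  induction m with
  | zero => simp
  | succ n ih =>
    have h1 : 2 * (n + 1) = (2 * n + 1) + 1 := by ring
    rw [h1, Finset.prod_Ioc_succ_top (by omega), Finset.prod_Ioc_succ_top (by omega),
      Finset.prod_Ioc_succ_top (by omega), Finset.prod_Ioc_succ_top (by omega), ih]
    have e1 : 2 * (n + 1) - 1 = 2 * n + 1 := by omega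
    have e2 : 2 * (n + 1) = 2 * n + 1 + 1 := by omega
    rw [e1, ← e2]
    ring


lemma htwo : (2 : R2) = 0 := by
  have h : ((2 : ℕ) : R2) = 0 := by
    rw [← Polynomial.C_eq_natCast]
    have : ((2 : ℕ) : ZMod 2) = 0 := by decide
    rw [this, Polynomial.C_0]
  exact_mod_cast h

/-- Gaussian binomial coefficients in base `X^32`, defined by the `q`-Pascal rule. -/
noncomputable def gb : ℕ → ℕ → R2
  | 0, 0 => 1
  | 0, _ + 1 => 0
  | n + 1, 0 => gb n 0
  | n + 1, k + 1 => gb n (k + 1) + X ^ (32 * (n - k)) * gb n k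

lemma gb_zero_right : ∀ n, gb n 0 = 1
  | 0 => rfl
  | n + 1 => by rw [gb, gb_zero_right n]

lemma gb_eq_zero : ∀ n k, n < k → gb n k = 0
  | 0, 0, h => by omega
  | 0, k + 1, _ => rfl
  | n + 1, 0, h => by omega
  | n + 1, k + 1, h => by
    rw [gb, gb_eq_zero n (k + 1) (by omega), gb_eq_zero n k (by omega)]
    ring

lemma gb_diag : ∀ n, gb n n = 1
  | 0 => rfl
  | n + 1 => by
    rw [gb, gb_eq_zero n (n + 1) (by omega), gb_diag n]
    simp

/-- `pq M = ∏_{0 < i ≤ M} (1 + X^(32 i))`. -/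
noncomputable def pq (m : ℕ) : R2 := PF (fun i => 32 * i) 0 m

lemma pq_succ (m : ℕ) : pq (m + 1) = pq m * (1 + X ^ (32 * (m + 1))) := by
  unfold pq
  exact PF_succ_top _ (by omega)

lemma pq_zero : pq 0 = 1 := by simp [pq, PF]

lemma pq_ne_zero (m : ℕ) : pq m ≠ 0 :=
  PF_ne_zero _ _ _ (fun i hi _ => by omega)

/-- the product formula: `gb n k * pq k * pq (n-k) = pq n`. -/
lemma gb_prod : ∀ n k, k ≤ n → gb n k * pq k * pq (n - k) = pq n := by
  intro n
  induction n with
  | zero => intro k hk; interval_cases k; simp [gb, pq_zero]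
  | succ n ih =>
    intro k hk
    match k with
    | 0 => simp [gb_zero_right, pq_zero]
    | j + 1 =>
      rcases Nat.lt_or_ge j n with hj | hj
      · -- j + 1 ≤ n
        have e1 := ih (j + 1) (by omega)
        have e2 := ih j (by omega)
        have e3 : n - (j + 1) + 1 = n - j := by omega
        have e5 : n + 1 - (j + 1) = n - j := by omega
        have hs : pq (n - j) = pq (n - (j + 1)) * (1 + X ^ (32 * (n - j))) := by
          rw [← e3, pq_succ]
        have hu : pq (j + 1) = pq j * (1 + X ^ (32 * (j + 1))) := pq_succ j
        have hAB : (X : R2) ^ (32 * (n + 1)) = X ^ (32 * (j + 1)) * X ^ (32 * (n - j)) := by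
          rw [← pow_add]
          congr 1
          omega
        rw [hu] at e1
        rw [hs] at e2
        rw [gb, e5, hs, hu, pq_succ, hAB]
        linear_combination (1 + X ^ (32 * (n - j))) * e1
          + X ^ (32 * (n - j)) * (1 + X ^ (32 * (j + 1))) * e2
          + pq n * X ^ (32 * (n - j)) * htwo
      · -- k = n + 1
        have hjn : j = n := by omega
        subst hjn
        rw [gb, gb_eq_zero j (j + 1) (by omega), gb_diag j]
        have : j + 1 - (j + 1) = 0 := by omega
        rw [this, pq_zero, Nat.sub_self]
        ring

/-- the second Pascal rule. -/
lemma gb_pascal2 (n k : ℕ) : gb (n + 1) (k + 1) = X ^ (32 * (k + 1)) * gb n (k + 1) + gb n k := by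
  rcases Nat.lt_or_ge n k with h | h
  · -- k > n : all three are zero-ish
    rw [gb_eq_zero (n + 1) (k + 1) (by omega), gb_eq_zero n (k + 1) (by omega),
      gb_eq_zero n k (by omega)]
    ring
  rcases Nat.eq_or_lt_of_le h with h' | h'
  · subst h'
    rw [gb_diag, gb_eq_zero k (k + 1) (by omega), gb_diag]
    ring
  · -- k + 1 ≤ n
    have hkn : k + 1 ≤ n := h'
    apply mul_right_cancel₀ (b := pq (k + 1) * pq (n - k)) (by
      exact mul_ne_zero (pq_ne_zero _) (pq_ne_zero _))
    have e1 : gb (n + 1) (k + 1) * pq (k + 1) * pq (n - k) = pq (n + 1) := by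
      have := gb_prod (n + 1) (k + 1) (by omega)
      have e5 : n + 1 - (k + 1) = n - k := by omega
      rwa [e5] at this
    have e2 : gb n (k + 1) * pq (k + 1) * pq (n - (k + 1)) = pq n := gb_prod n (k + 1) hkn
    have e3 : gb n k * pq k * pq (n - k) = pq n := gb_prod n k (by omega)
    have hs : pq (n - k) = pq (n - (k + 1)) * (1 + X ^ (32 * (n - k))) := by
      have e4 : n - (k + 1) + 1 = n - k := by omega
      rw [← e4, pq_succ]
    have hu : pq (k + 1) = pq k * (1 + X ^ (32 * (k + 1))) := pq_succ k
    have hN : pq (n + 1) = pq n * (1 + X ^ (32 * (n + 1))) := pq_succ n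
    have hAB : (X : R2) ^ (32 * (n + 1)) = X ^ (32 * (k + 1)) * X ^ (32 * (n - k)) := by
      rw [← pow_add]; congr 1; omega
    rw [hu] at e2
    rw [hs] at e3
    calc gb (n + 1) (k + 1) * (pq (k + 1) * pq (n - k))
        = gb (n + 1) (k + 1) * pq (k + 1) * pq (n - k) := by ring
      _ = pq (n + 1) := e1
      _ = (X ^ (32 * (k + 1)) * gb n (k + 1) + gb n k) * (pq (k + 1) * pq (n - k)) := by
          rw [hN, hAB, hs, hu]
          linear_combination (- (X ^ (32 * (k + 1)) * (1 + X ^ (32 * (n - k))))) * e2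
            + (- (1 + X ^ (32 * (k + 1)))) * e3
            + (- (pq n * X ^ (32 * (k + 1)))) * htwo


lemma gb_pascal1 (n k : ℕ) :
    gb (n + 1) (k + 1) = gb n (k + 1) + X ^ (32 * (n - k)) * gb n k := by
  rw [gb]

/-- exponent of the theta side -/
def en (j : ℤ) : ℕ := (16 * j ^ 2 + 8 * j).toNat

lemma en_nonneg (j : ℤ) : 0 ≤ 16 * j ^ 2 + 8 * j := by
  rcases le_or_gt 0 j with h | h
  · nlinarith
  · have h1 : (0:ℤ) ≤ (-j) * (-(2 * j + 1)) := mul_nonneg (by omega) (by omega)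
    nlinarith

lemma en_cast (j : ℤ) : (en j : ℤ) = 16 * j ^ 2 + 8 * j :=
  Int.toNat_of_nonneg (en_nonneg j)

/-- `gb` with shifted, integer index. -/
noncomputable def gz (M : ℕ) (j : ℤ) : R2 :=
  if 0 ≤ j + M then gb (2 * M) (j + M).toNat else 0

lemma gz_eq_zero_of_lt {M : ℕ} {j : ℤ} (h : j < -(M:ℤ)) : gz M j = 0 := by
  rw [gz, if_neg (by omega)]

lemma gz_eq_zero_of_gt {M : ℕ} {j : ℤ} (h : (M:ℤ) < j) : gz M j = 0 := by
  rw [gz, if_pos (by omega)]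
  exact gb_eq_zero _ _ (by omega)

noncomputable def S (M : ℕ) : R2 := ∑ j ∈ Finset.Icc (-(M:ℤ)) M, X ^ en j * gz M j

lemma sum_gz_ext (M : ℕ) {a b : ℤ} (ha : a ≤ -(M:ℤ)) (hb : (M:ℤ) ≤ b) :
    ∑ j ∈ Finset.Icc a b, X ^ en j * gz M j = S M := by
  rw [S]
  symm
  apply Finset.sum_subset
  · intro j hj
    rw [Finset.mem_Icc] at hj ⊢
    omega
  · intro j hj hj'
    rw [Finset.mem_Icc] at hj hj'
    rcases lt_or_ge j (-(M:ℤ)) with h | h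
    · rw [gz_eq_zero_of_lt h, mul_zero]
    · rw [gz_eq_zero_of_gt (by omega), mul_zero]

/-- combined two-step Pascal recurrence -/
lemma gb_CR (M k : ℕ) (hk : k ≤ 2 * M + 1) :
    gb (2 * M + 2) (k + 1) = X ^ (32 * (k + 1)) * gb (2 * M) (k + 1) + gb (2 * M) k
      + X ^ (32 * (2 * M + 1)) * gb (2 * M) k
      + X ^ (32 * (2 * M + 1 - k)) * (if k = 0 then 0 else gb (2 * M) (k - 1)) := by
  have p1 : gb (2 * M + 2) (k + 1)
      = gb (2 * M + 1) (k + 1) + X ^ (32 * (2 * M + 1 - k)) * gb (2 * M + 1) k := by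
    have := gb_pascal1 (2 * M + 1) k
    convert this using 3 <;> omega
  have p2 : gb (2 * M + 1) (k + 1)
      = X ^ (32 * (k + 1)) * gb (2 * M) (k + 1) + gb (2 * M) k := gb_pascal2 (2 * M) k
  cases k with
  | zero =>
    rw [p1, p2, gb_zero_right, gb_zero_right]
    simp only [Nat.sub_zero, eq_self_iff_true, if_true]
    ring
  | succ k' =>
    have p3 : gb (2 * M + 1) (k' + 1)
        = X ^ (32 * (k' + 1)) * gb (2 * M) (k' + 1) + gb (2 * M) k' := gb_pascal2 (2 * M) k'
    rw [p1, p2, p3]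
    have hx : (X:R2) ^ (32 * (2 * M + 1 - (k' + 1))) * X ^ (32 * (k' + 1))
        = X ^ (32 * (2 * M + 1)) := by
      rw [← pow_add]; congr 1; omega
    simp only [if_neg (by omega : ¬ k' + 1 = 0), Nat.add_sub_cancel]
    linear_combination (gb (2 * M) (k' + 1)) * hx

/-- pointwise recurrence for `gz (M+1)` -/
lemma gz_rec (M : ℕ) (j : ℤ) (h1 : -(M:ℤ) - 1 ≤ j) (h2 : j ≤ (M:ℤ) + 1) :
    gz (M + 1) j = X ^ (32 * (M + 1 + j).toNat) * gz M (j + 1) + gz M j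
      + X ^ (32 * (2 * M + 1)) * gz M j + X ^ (32 * (M + 1 - j).toNat) * gz M (j - 1) := by
  rcases eq_or_lt_of_le h1 with hlow | hlow
  · -- j = -(M+1)
    have hj : j = -(M:ℤ) - 1 := hlow.symm
    subst hj
    have g1 : gz (M + 1) (-(M:ℤ) - 1) = 1 := by
      rw [gz, if_pos (by push_cast; omega)]
      have : (-(M:ℤ) - 1 + (M + 1)).toNat = 0 := by push_cast; omega
      rw [show (-(M:ℤ) - 1 + (M + 1 : ℕ)) = (-(M:ℤ) - 1 + ((M:ℤ) + 1)) by push_cast; ring] at *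
      rw [show (-(M:ℤ) - 1 + ((M:ℤ) + 1)) = 0 by ring]
      simp [gb_zero_right]
    have g2 : gz M (-(M:ℤ) - 1 + 1) = 1 := by
      rw [gz, if_pos (by omega)]
      rw [show (-(M:ℤ) - 1 + 1 + M) = 0 by ring]
      simp [gb_zero_right]
    have g3 : gz M (-(M:ℤ) - 1) = 0 := gz_eq_zero_of_lt (by omega)
    have g4 : gz M (-(M:ℤ) - 1 - 1) = 0 := gz_eq_zero_of_lt (by omega)
    have g5 : (32 * ((M:ℤ) + 1 + (-(M:ℤ) - 1)).toNat) = 0 := by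
      rw [show ((M:ℤ) + 1 + (-(M:ℤ) - 1)) = 0 by ring]
      simp
    rw [g1, g2, g3, g4]
    rw [show ((M:ℤ) + 1 + (-(M:ℤ) - 1)) = 0 by ring]
    simp
  · -- j ≥ -M
    have hjM : -(M:ℤ) ≤ j := by omega
    set k := (j + M).toNat with hkdef
    have hk : (k : ℤ) = j + M := Int.toNat_of_nonneg (by omega)
    have hk2 : k ≤ 2 * M + 1 := by omega
    have e0 : gz (M + 1) j = gb (2 * M + 2) (k + 1) := by
      rw [gz, if_pos (by push_cast; omega)]
      have h1 : 2 * (M + 1) = 2 * M + 2 := by ring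
      have h2 : (j + ((M + 1 : ℕ) : ℤ)).toNat = k + 1 := by push_cast; omega
      rw [h1, h2]
    have e1 : gz M (j + 1) = gb (2 * M) (k + 1) := by
      rw [gz, if_pos (by omega)]
      have h2 : (j + 1 + (M:ℤ)).toNat = k + 1 := by omega
      rw [h2]
    have e2 : gz M j = gb (2 * M) k := by
      rw [gz, if_pos (by omega)]
    have e3 : gz M (j - 1) = if k = 0 then 0 else gb (2 * M) (k - 1) := by
      rcases Nat.eq_zero_or_pos k with hk0 | hk0
      · rw [if_pos hk0, gz_eq_zero_of_lt (by omega)]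
      · rw [if_neg (by omega), gz, if_pos (by omega)]
        have h2 : (j - 1 + (M:ℤ)).toNat = k - 1 := by omega
        rw [h2]
    have e4 : (M + 1 + j).toNat = k + 1 := by omega
    have e5 : (M + 1 - j).toNat = 2 * M + 1 - k := by omega
    rw [e0, e1, e2, e3, e4, e5]
    exact gb_CR M k hk2

lemma sum_shift (a b c : ℤ) (f : ℤ → R2) :
    ∑ j ∈ Finset.Icc a b, f (j + c) = ∑ i ∈ Finset.Icc (a + c) (b + c), f i := by
  rw [← Finset.map_add_right_Icc, Finset.sum_map]
  rfl

def eo (i : ℕ) : ℕ := 16 * i - 8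

noncomputable def W (M : ℕ) : R2 := PF eo 0 (2 * M)

lemma W_succ (M : ℕ) :
    W (M + 1) = W M * (1 + X ^ (32 * M + 8)) * (1 + X ^ (32 * M + 24)) := by
  have h1 : 2 * (M + 1) = (2 * M + 1) + 1 := by ring
  rw [W, h1, PF_succ_top eo (by omega), PF_succ_top eo (by omega)]
  rw [show eo (2 * M + 1) = 32 * M + 8 by unfold eo; omega,
    show eo (2 * M + 1 + 1) = 32 * M + 24 by unfold eo; omega]
  rfl

/-- The finite Jacobi triple product identity, mod 2. -/
theorem jtp : ∀ M, S M = W M := by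
  intro M
  induction M with
  | zero =>
    rw [S, W]
    norm_num [PF]
    rw [gz, if_pos (by omega)]
    norm_num [show en 0 = 0 by rfl, gb_zero_right]
  | succ M ih =>
    have step1 : S (M + 1) = ∑ j ∈ Finset.Icc (-(M:ℤ) - 1) ((M:ℤ) + 1),
        (X ^ en j * (X ^ (32 * (M + 1 + j).toNat) * gz M (j + 1))
         + X ^ en j * gz M j
         + X ^ en j * (X ^ (32 * (2 * M + 1)) * gz M j)
         + X ^ en j * (X ^ (32 * (M + 1 - j).toNat) * gz M (j - 1))) := by
      rw [S]
      rw [show (-(↑(M+1):ℤ)) = -(M:ℤ) - 1 by push_cast; ring,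
        show ((↑(M+1):ℤ)) = (M:ℤ) + 1 by push_cast; ring]
      refine Finset.sum_congr rfl fun j hj => ?_
      rw [Finset.mem_Icc] at hj
      rw [gz_rec M j hj.1 hj.2]
      ring
    rw [step1]
    rw [Finset.sum_add_distrib, Finset.sum_add_distrib, Finset.sum_add_distrib]
    -- sum B
    have hB : ∑ j ∈ Finset.Icc (-(M:ℤ) - 1) ((M:ℤ) + 1), X ^ en j * gz M j = S M :=
      sum_gz_ext M (by omega) (by omega)
    -- sum C
    have hC : ∑ j ∈ Finset.Icc (-(M:ℤ) - 1) ((M:ℤ) + 1),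
        X ^ en j * (X ^ (32 * (2 * M + 1)) * gz M j) = X ^ (32 * (2 * M + 1)) * S M := by
      rw [← sum_gz_ext M (a := -(M:ℤ) - 1) (b := (M:ℤ) + 1) (by omega) (by omega),
        Finset.mul_sum]
      exact Finset.sum_congr rfl fun j _ => by ring
    -- sum A
    have hA : ∑ j ∈ Finset.Icc (-(M:ℤ) - 1) ((M:ℤ) + 1),
        X ^ en j * (X ^ (32 * (M + 1 + j).toNat) * gz M (j + 1))
        = X ^ (32 * M + 8) * S M := by
      have hsh := sum_shift (-(M:ℤ) - 1) ((M:ℤ) + 1) 1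
        (fun i => X ^ en (i - 1) * (X ^ (32 * (M + 1 + (i - 1)).toNat) * gz M i))
      simp only [add_sub_cancel_right] at hsh
      rw [hsh]
      rw [show (-(M:ℤ) - 1 + 1) = -(M:ℤ) by ring, show ((M:ℤ) + 1 + 1) = (M:ℤ) + 2 by ring]
      rw [← sum_gz_ext M (a := -(M:ℤ)) (b := (M:ℤ) + 2) (by omega) (by omega), Finset.mul_sum]
      refine Finset.sum_congr rfl fun i hi => ?_
      rw [Finset.mem_Icc] at hi
      have hexp : en (i - 1) + 32 * (M + 1 + (i - 1)).toNat = 32 * M + 8 + en i := by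
        have h1 : ((M:ℤ) + 1 + (i - 1)) = (M:ℤ) + i := by ring
        have h2 : 0 ≤ (M:ℤ) + i := by omega
        have : ((en (i - 1) + 32 * ((M:ℤ) + 1 + (i - 1)).toNat : ℕ) : ℤ)
            = ((32 * M + 8 + en i : ℕ) : ℤ) := by
          push_cast [en_cast, h1, Int.toNat_of_nonneg h2]
          ring
        exact_mod_cast this
      calc X ^ en (i - 1) * (X ^ (32 * (M + 1 + (i - 1)).toNat) * gz M i)
          = X ^ (en (i - 1) + 32 * (M + 1 + (i - 1)).toNat) * gz M i := by
            rw [pow_add]; ring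
        _ = X ^ (32 * M + 8 + en i) * gz M i := by rw [hexp]
        _ = X ^ (32 * M + 8) * (X ^ en i * gz M i) := by rw [pow_add]; ring
    -- sum D
    have hD : ∑ j ∈ Finset.Icc (-(M:ℤ) - 1) ((M:ℤ) + 1),
        X ^ en j * (X ^ (32 * (M + 1 - j).toNat) * gz M (j - 1))
        = X ^ (32 * M + 24) * S M := by
      have hsh := sum_shift (-(M:ℤ) - 1) ((M:ℤ) + 1) (-1)
        (fun i => X ^ en (i + 1) * (X ^ (32 * (M + 1 - (i + 1)).toNat) * gz M i))
      simp only [← sub_eq_add_neg, sub_add_cancel] at hsh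
      rw [hsh]
      rw [show (-(M:ℤ) - 1 - 1) = -(M:ℤ) - 2 by ring, show ((M:ℤ) + 1 - 1) = (M:ℤ) by ring]
      rw [← sum_gz_ext M (a := -(M:ℤ) - 2) (b := (M:ℤ)) (by omega) (by omega), Finset.mul_sum]
      refine Finset.sum_congr rfl fun i hi => ?_
      rw [Finset.mem_Icc] at hi
      have hexp : en (i + 1) + 32 * (M + 1 - (i + 1)).toNat = 32 * M + 24 + en i := by
        have h1 : ((M:ℤ) + 1 - (i + 1)) = (M:ℤ) - i := by ring
        have h2 : 0 ≤ (M:ℤ) - i := by omega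
        have : ((en (i + 1) + 32 * ((M:ℤ) + 1 - (i + 1)).toNat : ℕ) : ℤ)
            = ((32 * M + 24 + en i : ℕ) : ℤ) := by
          push_cast [en_cast, h1, Int.toNat_of_nonneg h2]
          ring
        exact_mod_cast this
      calc X ^ en (i + 1) * (X ^ (32 * (M + 1 - (i + 1)).toNat) * gz M i)
          = X ^ (en (i + 1) + 32 * (M + 1 - (i + 1)).toNat) * gz M i := by
            rw [pow_add]; ring
        _ = X ^ (32 * M + 24 + en i) * gz M i := by rw [hexp]
        _ = X ^ (32 * M + 24) * (X ^ en i * gz M i) := by rw [pow_add]; ring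
    rw [hA, hB, hC, hD, ih, W_succ]
    have hxx : (X:R2) ^ (32 * (2 * M + 1)) = X ^ (32 * M + 8) * X ^ (32 * M + 24) := by
      rw [← pow_add]; congr 1; omega
    rw [hxx]
    ring

/-- low-degree behaviour of `pq M * gb (2M) k`. -/
lemma D_lowEq (M k : ℕ) (hk : k ≤ 2 * M) :
    LowEq (32 * min k (2 * M - k) + 31) (pq M * gb (2 * M) k) 1 := by
  set s := min k (2 * M - k) with hs
  set l := max k (2 * M - k) with hl
  have hsM : s ≤ M := by omega
  have hMl : M ≤ l := by omega
  have hl2 : l ≤ 2 * M := by omega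
  have key : pq M * gb (2 * M) k = PF (fun i => 32 * i) s M * PF (fun i => 32 * i) l (2 * M) := by
    apply mul_right_cancel₀ (b := pq k * pq (2 * M - k))
      (mul_ne_zero (pq_ne_zero _) (pq_ne_zero _))
    have h1 : pq M * gb (2 * M) k * (pq k * pq (2 * M - k)) = pq M * pq (2 * M) := by
      have := gb_prod (2 * M) k hk
      calc pq M * gb (2 * M) k * (pq k * pq (2 * M - k))
          = pq M * (gb (2 * M) k * pq k * pq (2 * M - k)) := by ring
        _ = pq M * pq (2 * M) := by rw [this]
    rw [h1]
    have h2 : pq k * pq (2 * M - k) = pq s * pq l := by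
      rcases le_total k (2 * M - k) with h | h
      · rw [show s = k by omega, show l = 2 * M - k by omega]
      · rw [show s = 2 * M - k by omega, show l = k by omega]
        ring
    rw [h2]
    symm
    have h3 : pq s * PF (fun i => 32 * i) s M = pq M := PF_consecutive _ (by omega) hsM
    have h4 : pq l * PF (fun i => 32 * i) l (2 * M) = pq (2 * M) := PF_consecutive _ (by omega) hl2
    calc PF (fun i => 32 * i) s M * PF (fun i => 32 * i) l (2 * M) * (pq s * pq l)
        = (pq s * PF (fun i => 32 * i) s M) * (pq l * PF (fun i => 32 * i) l (2 * M)) := by ring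
      _ = pq M * pq (2 * M) := by rw [h3, h4]
  rw [key]
  have g1 : LowEq (32 * s + 31) (PF (fun i => 32 * i) s M) 1 :=
    PF_lowEq_one _ _ _ (fun i hi _ => by omega)
  have g2 : LowEq (32 * s + 31) (PF (fun i => 32 * i) l (2 * M)) 1 :=
    PF_lowEq_one _ _ _ (fun i hi _ => by omega)
  have := g1.mul g2
  rwa [mul_one] at this

lemma en_inj {j j' : ℤ} (h : 16 * j ^ 2 + 8 * j = 16 * j' ^ 2 + 8 * j') : j = j' := by
  have h2 : (j - j') * (16 * (j + j') + 8) = 0 := by linear_combination h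
  rcases mul_eq_zero.mp h2 with h3 | h3
  · omega
  · omega

lemma en_range {j : ℤ} {t M : ℕ} (hj : (t:ℤ) = 16 * j ^ 2 + 8 * j) (ht : t ≤ 32 * M) :
    -(M:ℤ) ≤ j ∧ j ≤ M := by
  constructor
  · by_contra h
    push_neg at h
    have h1 : j ≤ -(M:ℤ) - 1 := by omega
    have h2 : (0:ℤ) ≤ (-j - ((M:ℤ) + 1)) * (-j) := mul_nonneg (by omega) (by omega)
    have h4 : (0:ℤ) ≤ (16 * (M:ℤ) + 8) * ((-j) - ((M:ℤ) + 1)) := mul_nonneg (by omega) (by omega)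
    have h3 : (t:ℤ) ≤ 32 * M := by exact_mod_cast ht
    nlinarith [sq_nonneg (4 * (M:ℤ) - 1), h2, h4, h3, hj]
  · by_contra h
    push_neg at h
    have h1 : (M:ℤ) + 1 ≤ j := by omega
    have h2 : (0:ℤ) ≤ (j - ((M:ℤ) + 1)) * j := mul_nonneg (by omega) (by omega)
    have h4 : (0:ℤ) ≤ (16 * (M:ℤ) + 8) * (j - ((M:ℤ) + 1)) := mul_nonneg (by omega) (by omega)
    have h3 : (t:ℤ) ≤ 32 * M := by exact_mod_cast ht
    nlinarith [sq_nonneg (4 * (M:ℤ) - 1), h2, h4, h3, hj]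

/-- the main coefficient computation. -/
theorem main_coeff (M t : ℕ) (ht : t ≤ 32 * M) :
    (pq M * W M).coeff t = if ∃ j : ℤ, (t:ℤ) = 16 * j ^ 2 + 8 * j then 1 else 0 := by
  rw [← jtp M, S, Finset.mul_sum]
  have hterm : ∀ j ∈ Finset.Icc (-(M:ℤ)) M,
      pq M * (X ^ en j * gz M j) = (pq M * gz M j) * X ^ en j :=
    fun j _ => by ring
  rw [Finset.sum_congr rfl hterm, Polynomial.finset_sum_coeff]
  have hcoeff : ∀ j ∈ Finset.Icc (-(M:ℤ)) M,
      ((pq M * gz M j) * X ^ en j).coeff t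
        = if en j ≤ t then (pq M * gz M j).coeff (t - en j) else 0 :=
    fun j _ => Polynomial.coeff_mul_X_pow' _ _ _
  rw [Finset.sum_congr rfl hcoeff]
  -- auxiliary: zero term when `en j ≠ t`
  have hzero : ∀ j ∈ Finset.Icc (-(M:ℤ)) M, en j ≠ t →
      (if en j ≤ t then (pq M * gz M j).coeff (t - en j) else 0) = 0 := by
    intro j hj hne
    rw [Finset.mem_Icc] at hj
    by_cases hle : en j ≤ t
    · rw [if_pos hle]
      set k := (j + M).toNat with hkdef
      have hk : (k : ℤ) = j + M := Int.toNat_of_nonneg (by omega)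
      have hk2 : k ≤ 2 * M := by omega
      have hgz : gz M j = gb (2 * M) k := by rw [gz, if_pos (by omega)]
      have hb1 : (t:ℤ) - en j ≤ 32 * k + 31 := by
        have := en_cast j
        nlinarith [sq_nonneg (4 * j + 5), this]
      have hb2 : (t:ℤ) - en j ≤ 32 * (2 * M - k : ℕ) + 31 := by
        have h1 := en_cast j
        have h2 : ((2 * M - k : ℕ) : ℤ) = 2 * M - k := by omega
        rw [h2]
        nlinarith [sq_nonneg (4 * j - 3), h1]
      have hbound : t - en j ≤ 32 * min k (2 * M - k) + 31 := by
        rcases le_total k (2 * M - k) with h | h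
        · rw [min_eq_left h]; omega
        · rw [min_eq_right h]; omega
      have := D_lowEq M k hk2 (t - en j) hbound
      rw [hgz, this, Polynomial.coeff_one, if_neg (by omega)]
    · rw [if_neg hle]
  by_cases hex : ∃ j : ℤ, (t:ℤ) = 16 * j ^ 2 + 8 * j
  · obtain ⟨j0, hj0⟩ := hex
    rw [if_pos ⟨j0, hj0⟩]
    have hr := en_range hj0 ht
    have hmem : j0 ∈ Finset.Icc (-(M:ℤ)) M := Finset.mem_Icc.mpr hr
    have hent : en j0 = t := by
      have := en_cast j0
      omega
    rw [Finset.sum_eq_single_of_mem j0 hmem]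
    · rw [if_pos (by omega), hent, Nat.sub_self]
      set k := (j0 + M).toNat with hkdef
      have hk2 : k ≤ 2 * M := by omega
      have hgz : gz M j0 = gb (2 * M) k := by rw [gz, if_pos (by omega)]
      have := D_lowEq M k hk2 0 (by omega)
      rw [hgz, this, Polynomial.coeff_one, if_pos rfl]
    · intro j hj hne
      apply hzero j hj
      intro hc
      apply hne
      apply en_inj (j := j) (j' := j0)
      have := en_cast j
      omega
  · rw [if_neg hex]
    apply Finset.sum_eq_zero
    intro j hj
    apply hzero j hj
    intro hc
    apply hex
    refine ⟨j, ?_⟩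
    have := en_cast j
    omega

lemma one_add_pow_sq (n : ℕ) : ((1:R2) + X ^ n) ^ 2 = 1 + X ^ (2 * n) := by
  have h : ((1:R2) + X ^ n) ^ (2:ℕ) = (1:R2) ^ (2:ℕ) + (X ^ n) ^ (2:ℕ) :=
    add_pow_char (p := 2) _ _
  rw [h, one_pow, ← pow_mul, mul_comm n 2]

lemma one_add_pow_24 (n : ℕ) :
    ((1:R2) + X ^ n) ^ 24 = (1 + X ^ (8 * n)) * (1 + X ^ (16 * n)) := by
  have h4 : ((1:R2) + X ^ n) ^ 4 = 1 + X ^ (4 * n) := by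
    rw [show (4:ℕ) = 2 * 2 from rfl, pow_mul, one_add_pow_sq, one_add_pow_sq,
      show 2 * (2 * n) = 4 * n by ring]
  have h8 : ((1:R2) + X ^ n) ^ 8 = 1 + X ^ (8 * n) := by
    rw [show (8:ℕ) = 4 * 2 from rfl, pow_mul, h4, one_add_pow_sq,
      show 2 * (4 * n) = 8 * n by ring]
  have h3 : ((1:R2) + X ^ (8 * n)) ^ 3 = (1 + X ^ (8 * n)) * (1 + X ^ (16 * n)) := by
    have h2 := one_add_pow_sq (8 * n)
    calc ((1:R2) + X ^ (8 * n)) ^ 3 = (1 + X ^ (8 * n)) * (1 + X ^ (8 * n)) ^ 2 := by ring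
      _ = (1 + X ^ (8 * n)) * (1 + X ^ (16 * n)) := by
          rw [h2, show 2 * (8 * n) = 16 * n by ring]
  rw [show (24:ℕ) = 8 * 3 from rfl, pow_mul, h8, h3]

lemma square_iff (t : ℕ) :
    (∃ j : ℤ, (t:ℤ) = 16 * j ^ 2 + 8 * j) ↔ (∃ d : ℕ, Odd d ∧ t + 1 = d ^ 2) := by
  constructor
  · rintro ⟨j, hj⟩
    refine ⟨(4 * j + 1).natAbs, ?_, ?_⟩
    · rw [Int.natAbs_odd]
      exact ⟨2 * j, by ring⟩
    · have h1 : (((4 * j + 1).natAbs : ℤ)) ^ 2 = (4 * j + 1) ^ 2 := by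
        rw [← Int.abs_eq_natAbs, sq_abs]
      have h2 : ((t + 1 : ℕ) : ℤ) = (((4 * j + 1).natAbs : ℤ)) ^ 2 := by
        rw [h1]; push_cast; linear_combination hj
      exact_mod_cast h2
  · rintro ⟨d, hodd, ht1⟩
    have hD : Odd (d : ℤ) := Int.odd_coe_nat d |>.mpr hodd
    have hmod : (d : ℤ) % 2 = 1 := Int.odd_iff.mp hD
    have hc : (t : ℤ) = (d : ℤ) ^ 2 - 1 := by
      have := congrArg (Nat.cast : ℕ → ℤ) ht1
      push_cast at this
      linarith
    have h4 : (d : ℤ) % 4 = 1 ∨ (d : ℤ) % 4 = 3 := by omega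
    rcases h4 with h4 | h4
    · refine ⟨(d : ℤ) / 4, ?_⟩
      have h41 : 4 * ((d:ℤ) / 4) + 1 = (d:ℤ) := by omega
      have hsq : (4 * ((d:ℤ) / 4) + 1) ^ 2 = ((d:ℤ)) ^ 2 := by rw [h41]
      linear_combination hc - hsq
    · refine ⟨-((d : ℤ) / 4) - 1, ?_⟩
      have h41 : 4 * (-((d:ℤ) / 4) - 1) + 1 = -(d:ℤ) := by omega
      have hsq : (4 * (-((d:ℤ) / 4) - 1) + 1) ^ 2 = ((d:ℤ)) ^ 2 := by
        rw [h41]; ring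
      linear_combination hc - hsq

/-- The key computation: the mod-2 coefficient. -/
theorem key (m : ℕ) (hm : 1 ≤ m) :
    ((X * ∏ n ∈ Finset.Icc 1 m, (1 - X ^ n) ^ 24 : Polynomial ℤ).map
        (Int.castRingHom (ZMod 2))).coeff m
      = if ∃ d : ℕ, Odd d ∧ m = d ^ 2 then 1 else 0 := by
  obtain ⟨t, rfl⟩ : ∃ t, m = t + 1 := ⟨m - 1, by omega⟩
  rw [Polynomial.map_mul, Polynomial.map_X]
  rw [Polynomial.coeff_X_mul]
  rw [Polynomial.map_prod]
  have hfac : ∀ n ∈ Finset.Icc 1 (t + 1),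
      ((1 - X ^ n : Polynomial ℤ) ^ 24).map (Int.castRingHom (ZMod 2))
        = (1 + X ^ (8 * n)) * (1 + X ^ (16 * n)) := by
    intro n _
    rw [Polynomial.map_pow, Polynomial.map_sub, Polynomial.map_one, Polynomial.map_pow,
      Polynomial.map_X, CharTwo.sub_eq_add, one_add_pow_24]
  rw [Finset.prod_congr rfl hfac]
  rw [show Finset.Icc 1 (t + 1) = Finset.Ioc 0 (t + 1) from Finset.Icc_add_one_left_eq_Ioc 0 (t + 1)]
  rw [Finset.prod_mul_distrib]
  set m := t + 1 with hmdef
  -- identify with PF-products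
  have hA : (∏ n ∈ Finset.Ioc 0 m, ((1:R2) + X ^ (8 * n))) = PF (fun i => 8 * i) 0 m := rfl
  have hB : (∏ n ∈ Finset.Ioc 0 m, ((1:R2) + X ^ (16 * n))) = PF (fun i => 16 * i) 0 m := rfl
  rw [hA, hB]
  -- LowEq chain
  have c1 : LowEq t (PF (fun i => 8 * i) 0 m) (PF (fun i => 8 * i) 0 (2 * m)) :=
    PF_lowEq_extend _ 0 (by omega) (fun i hi => by omega) (by omega)
  have c2 : PF (fun i => 8 * i) 0 (2 * m) = PF (fun i => 16 * i) 0 m * PF eo 0 m := by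
    rw [PF, prod_Ioc_parity (fun i => 1 + X ^ (8 * i)) m]
    refine congrArg₂ (· * ·) ?_ ?_
    · exact Finset.prod_congr rfl fun i _ => by rw [show 8 * (2 * i) = 16 * i by ring]
    · refine Finset.prod_congr rfl fun i hi => ?_
      rw [Finset.mem_Ioc] at hi
      rw [show 8 * (2 * i - 1) = eo i by unfold eo; omega]
  have c3 : PF (fun i => 16 * i) 0 m * PF (fun i => 16 * i) 0 m = pq m := by
    rw [PF, pq, PF, ← Finset.prod_mul_distrib]
    refine Finset.prod_congr rfl fun i _ => ?_
    rw [← pow_two, one_add_pow_sq, show 2 * (16 * i) = 32 * i by ring]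
  have c4 : LowEq t (PF eo 0 m) (W m) :=
    PF_lowEq_extend eo 0 (by omega) (fun i hi => by unfold eo; omega) (by omega)
  have chain : LowEq t
      (PF (fun i => 8 * i) 0 m * PF (fun i => 16 * i) 0 m) (pq m * W m) := by
    have s1 : LowEq t (PF (fun i => 8 * i) 0 m * PF (fun i => 16 * i) 0 m)
        ((PF (fun i => 16 * i) 0 m * PF eo 0 m) * PF (fun i => 16 * i) 0 m) := by
      have := c1.mul (LowEq.refl t (PF (fun i => 16 * i) 0 m))
      rwa [c2] at this
    have s2 : ((PF (fun i => 16 * i) 0 m * PF eo 0 m) * PF (fun i => 16 * i) 0 m)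
        = pq m * PF eo 0 m := by
      rw [← c3]; ring
    have s3 : LowEq t (pq m * PF eo 0 m) (pq m * W m) :=
      (LowEq.refl t (pq m)).mul c4
    exact (s1.trans (by rw [s2]; exact LowEq.refl t _)).trans s3
  rw [chain t (le_refl t)]
  rw [main_coeff m t (by omega)]
  by_cases hex : ∃ j : ℤ, (t:ℤ) = 16 * j ^ 2 + 8 * j
  · rw [if_pos hex, if_pos ((square_iff t).mp hex)]
  · rw [if_neg hex, if_neg (fun hc => hex ((square_iff t).mpr hc))]

end DeltaMod2Aux

/-- The discriminant power series `Δ ∈ ℤ[[q]]`: its coefficient of `q^m` is the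
coefficient of `q^m` in the polynomial `q · ∏_{n=1}^{m} (1 - q^n)^24`. -/
noncomputable def Delta : PowerSeries ℤ :=
  PowerSeries.mk fun m =>
    (Polynomial.X * ∏ n ∈ Finset.Icc 1 m, (1 - Polynomial.X ^ n) ^ 24 : Polynomial ℤ).coeff m

namespace DeltaMod2Aux

lemma coeff_zero_delta : PowerSeries.coeff 0 Delta = 0 := by
  rw [Delta, PowerSeries.coeff_mk]
  rw [Polynomial.mul_coeff_zero, Polynomial.coeff_X_zero, zero_mul]

lemma master (m : ℕ) :
    ((PowerSeries.coeff m Delta : ℤ) : ZMod 2)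
      = if ∃ d : ℕ, Odd d ∧ m = d ^ 2 then 1 else 0 := by
  rcases Nat.eq_zero_or_pos m with hm | hm
  · subst hm
    rw [show ((PowerSeries.coeff 0 Delta : ℤ) : ZMod 2) = 0 by rw [coeff_zero_delta]; simp]
    rw [if_neg]
    rintro ⟨d, hodd, hd⟩
    have h1 : d % 2 = 1 := Nat.odd_iff.mp hodd
    have h2 : 0 < d ^ 2 := pow_pos (by omega) 2
    omega
  · rw [Delta, PowerSeries.coeff_mk]
    have h := key m hm
    rw [Polynomial.coeff_map] at h
    exact h

lemma odd_int_iff (c : ℤ) : Odd c ↔ ((c : ZMod 2) ≠ 0) := by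
  rw [← Int.not_even_iff_odd]
  rw [ne_eq, ZMod.intCast_zmod_eq_zero_iff_dvd]
  rw [Int.even_iff]
  omega

theorem Delta_mod_two_aux :
    PowerSeries.map (Int.castRingHom (ZMod 2)) Delta =
      PowerSeries.mk (fun m => if ∃ d : ℕ, Odd d ∧ m = d ^ 2 then (1 : ZMod 2) else 0) ∧
    PowerSeries.coeff 0 Delta = 0 ∧
    ∀ m : ℕ, 1 ≤ m →
      (Odd (PowerSeries.coeff m Delta) ↔ ∃ d : ℕ, Odd d ∧ m = d ^ 2) := by
  refine ⟨?_, coeff_zero_delta, ?_⟩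
  · ext n
    rw [PowerSeries.coeff_map, PowerSeries.coeff_mk]
    exact master n
  · intro m _
    have h := master m
    rw [odd_int_iff]
    by_cases hP : ∃ d : ℕ, Odd d ∧ m = d ^ 2
    · rw [if_pos hP] at h
      simp only [hP, iff_true]
      rw [h]
      decide
    · rw [if_neg hP] at h
      simp only [hP, iff_false, ne_eq, not_not]
      exact h

end DeltaMod2Aux


/-- The mod-2 reduction of `Δ` is `Σ_{n ≥ 1} q^{(2n-1)²}`; equivalently, the constant
coefficient of `Δ` is `0`, and for `m ≥ 1` the coefficient of `q^m` in `Δ` is odd iff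
`m` is the square of an odd natural number. -/
theorem Delta_mod_two :
    PowerSeries.map (Int.castRingHom (ZMod 2)) Delta =
      PowerSeries.mk (fun m => if ∃ d : ℕ, Odd d ∧ m = d ^ 2 then (1 : ZMod 2) else 0) ∧
    PowerSeries.coeff 0 Delta = 0 ∧
    ∀ m : ℕ, 1 ≤ m →
      (Odd (PowerSeries.coeff m Delta) ↔ ∃ d : ℕ, Odd d ∧ m = d ^ 2) := by
  exact DeltaMod2Aux.Delta_mod_two_aux
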